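/- Let G = (V, E) be a finite connected simple graph of diameter at most 2, and let P be a set of k pairwise disjoint unordered pairs of vertices of G (no vertex belongs to two pairs). Then there exist matchings M_1, …, M_m of G with m ≤ 3k such that every pair in P is served by the sequence M_1, …, M_m and the composition (in order) of all the associated swap permutations is the identity permutation of V. -/

import Mathlib

/-- A routing round on `G`: the swap permutation of a matching of `G`, i.e. an involution
of the vertices that moves vertices only along edges of `G`. -/
def isRound {V : Type*} (G : SimpleGraph V) (σ : Equiv.Perm V) : Prop :=
  σ * σ = 1 ∧ ∀ v : V, σ v ≠ v → G.Adj v (σ v)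

/-- Composition, in order, of a list of round permutations: for `L = [σ₁, …, σₘ]`,
`rComp L = σₘ ∘ ⋯ ∘ σ₁`. -/
def rComp {V : Type*} (L : List (Equiv.Perm V)) : Equiv.Perm V :=
  L.foldl (fun p σ => σ * p) 1

/-- `rt(G, π)`: the minimum number of routing rounds (matchings of `G`) whose swap
permutations, composed in order, realize the permutation `π`. -/
noncomputable def rtP {V : Type*} (G : SimpleGraph V) (π : Equiv.Perm V) : ℕ :=
  sInf {m | ∃ L : List (Equiv.Perm V), L.length = m ∧ (∀ σ ∈ L, isRound G σ) ∧ rComp L = π}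

/-- `rt(G)`: the routing number of `G`, the maximum of `rt(G, π)` over all permutations. -/
noncomputable def rt {V : Type*} [Fintype V] [DecidableEq V] (G : SimpleGraph V) : ℕ :=
  Finset.univ.sup (rtP G)

/-- The position permutation after `t` rounds of the sequence `L`: `π_t = σ_t ∘ ⋯ ∘ σ_1`. -/
def rPos {V : Type*} (L : List (Equiv.Perm V)) (t : ℕ) : Equiv.Perm V :=
  rComp (L.take t)


lemma foldl_mul_aux {V : Type*} (L : List (Equiv.Perm V)) (a : Equiv.Perm V) :
    L.foldl (fun p σ => σ * p) a = rComp L * a := by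
  induction L generalizing a with
  | nil => simp [rComp]
  | cons σ L ih =>
    simp only [rComp, List.foldl_cons]
    rw [ih (σ * a), ih (σ * 1)]
    group

lemma rComp_append {V : Type*} (L1 L2 : List (Equiv.Perm V)) :
    rComp (L1 ++ L2) = rComp L2 * rComp L1 := by
  unfold rComp
  rw [List.foldl_append, foldl_mul_aux]
  rfl

lemma isRound_swap {V : Type*} [DecidableEq V] {G : SimpleGraph V} {a w : V}
    (h : G.Adj a w) : isRound G (Equiv.swap a w) := by
  constructor
  · exact Equiv.swap_mul_self a w
  · intro x hx
    rcases eq_or_ne x a with rfl | hxa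
    · rw [Equiv.swap_apply_left]; exact h
    rcases eq_or_ne x w with rfl | hxw
    · rw [Equiv.swap_apply_right]; exact h.symm
    · rw [Equiv.swap_apply_of_ne_of_ne hxa hxw] at hx; exact absurd rfl hx

lemma walk_cases {V : Type*} {G : SimpleGraph V} {x y : V} (p : G.Walk x y)
    (hp : p.length ≤ 2) : x = y ∨ G.Adj x y ∨ ∃ w, G.Adj x w ∧ G.Adj w y := by
  match p with
  | .nil => left; rfl
  | .cons h .nil => right; left; exact h
  | .cons h (.cons h2 .nil) => right; right; exact ⟨_, h, h2⟩
  | .cons _ (.cons _ (.cons _ _)) => simp [SimpleGraph.Walk.length_cons] at hp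

/-- In a finite connected graph of diameter at most `2` (any two vertices are joined by a
walk of length at most `2`), any `k` pairwise disjoint pairs `{u i, v i}` of vertices (all
`2k` vertices distinct) can be served by a sequence of at most `3 * k` matchings whose swap
permutations compose (in order) to the identity. -/
theorem serve_pairs_of_diam_le_two
    {V : Type*} [Fintype V] [DecidableEq V] (G : SimpleGraph V) (hG : G.Connected)
    (hdiam : ∀ x y : V, ∃ p : G.Walk x y, p.length ≤ 2)
    (k : ℕ) (u v : Fin k → V)
    (hinj : Function.Injective (Sum.elim u v : Fin k ⊕ Fin k → V)) :
    ∃ L : List (Equiv.Perm V),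
      (∀ σ ∈ L, isRound G σ) ∧
      L.length ≤ 3 * k ∧
      rComp L = 1 ∧
      ∀ i : Fin k, ∃ t ≤ L.length, G.Adj (rPos L t (u i)) (rPos L t (v i)) := by
  clear hG
  induction k with
  | zero =>
    exact ⟨[], by simp, by simp, rfl, fun i => i.elim0⟩
  | succ n ih =>
    have hinj' : Function.Injective
        (Sum.elim (u ∘ Fin.castSucc) (v ∘ Fin.castSucc) : Fin n ⊕ Fin n → V) := by
      have : (Sum.elim (u ∘ Fin.castSucc) (v ∘ Fin.castSucc) : Fin n ⊕ Fin n → V)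
          = (Sum.elim u v) ∘ Sum.map Fin.castSucc Fin.castSucc := by
        funext a; cases a <;> rfl
      rw [this]
      exact hinj.comp (Function.Injective.sumMap
        (Fin.castSucc_injective n) (Fin.castSucc_injective n))
    obtain ⟨L, hL1, hL2, hL3, hL4⟩ := ih (u ∘ Fin.castSucc) (v ∘ Fin.castSucc) hinj'
    have hab : u (Fin.last n) ≠ v (Fin.last n) := by
      intro h
      have := hinj (a₁ := Sum.inl (Fin.last n)) (a₂ := Sum.inr (Fin.last n)) h
      simp at this
    obtain ⟨p, hp⟩ := hdiam (u (Fin.last n)) (v (Fin.last n))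
    rcases walk_cases p hp with h | h | ⟨w, hw1, hw2⟩
    · exact absurd h hab
    · -- already adjacent: no new rounds needed
      refine ⟨L, hL1, by omega, hL3, ?_⟩
      intro i
      rcases eq_or_ne i (Fin.last n) with rfl | hi
      · refine ⟨0, Nat.zero_le _, ?_⟩
        have h0 : rPos L 0 = 1 := by simp [rPos, rComp]
        rw [h0]; simpa using h
      · obtain ⟨j, rfl⟩ := Fin.exists_castSucc_eq.2 hi
        obtain ⟨t, ht, hadj⟩ := hL4 j
        exact ⟨t, ht, hadj⟩
    · -- distance 2: add two swap rounds
      set s := Equiv.swap (u (Fin.last n)) w with hs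
      refine ⟨L ++ [s, s], ?_, ?_, ?_, ?_⟩
      · intro σ hσ
        rcases List.mem_append.1 hσ with h' | h'
        · exact hL1 σ h'
        · simp only [List.mem_cons, List.not_mem_nil, or_false] at h'
          rcases h' with rfl | rfl <;> exact isRound_swap hw1
      · simp only [List.length_append, List.length_cons, List.length_nil]
        omega
      · rw [rComp_append, hL3]
        have : rComp [s, s] = 1 := by
          simp [rComp, hs, mul_assoc]
        rw [this, mul_one]
      · intro i
        rcases eq_or_ne i (Fin.last n) with rfl | hi
        · refine ⟨L.length + 1, by simp, ?_⟩
          have htake : (L ++ [s, s]).take (L.length + 1) = L ++ [s] := by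
            rw [List.take_append]
            simp
          have hpos : rPos (L ++ [s, s]) (L.length + 1) = s := by
            rw [rPos, htake, rComp_append, hL3, mul_one]
            simp [rComp]
          rw [hpos]
          have hvne1 : v (Fin.last n) ≠ u (Fin.last n) := fun h => hab h.symm
          have hvne2 : v (Fin.last n) ≠ w := fun h => (hw2.ne (h.symm)).elim
          rw [hs, Equiv.swap_apply_left, Equiv.swap_apply_of_ne_of_ne hvne1 hvne2]
          exact hw2
        · obtain ⟨j, rfl⟩ := Fin.exists_castSucc_eq.2 hi
          obtain ⟨t, ht, hadj⟩ := hL4 j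
          refine ⟨t, by simp; omega, ?_⟩
          have : rPos (L ++ [s, s]) t = rPos L t := by
            rw [rPos, rPos, List.take_append_of_le_length ht]
          rw [this]
          exact hadj
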